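/- Let G be a finite group and H ≤ G a subgroup, over an algebraically closed field k of characteristic zero. The restriction functor Res : Rep(G) → Rep(H) is 'normal' — i.e., for every irreducible representation V of G, if the trivial representation of H occurs in Res V then Res V is a direct sum of copies of the trivial representation of H — if and only if H is a normal subgroup of G. -/

import Mathlib

open CategoryTheory

namespace ResNormalAux

open MonoidAlgebra

set_option linter.unusedSectionVars false

variable {G : Type} [Group G] [Fintype G]

noncomputable instance : FiniteDimensional ℂ (MonoidAlgebra ℂ G) := by
  infer_instance

/-- The subrepresentation attached to an invariant subspace. -/
noncomputable def subrep (V : FDRep ℂ G) (p : Submodule ℂ V)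
    (hp : ∀ (g : G), ∀ v ∈ p, V.ρ g v ∈ p) : FDRep ℂ G :=
  FDRep.of
  { toFun := fun g => (V.ρ g).restrict (hp g)
    map_one' := by ext v; simp [LinearMap.restrict_apply]
    map_mul' := fun g₁ g₂ => by ext v; simp [LinearMap.restrict_apply] }

/-- The inclusion of a subrepresentation. -/
noncomputable def subrepι (V : FDRep ℂ G) (p : Submodule ℂ V)
    (hp : ∀ (g : G), ∀ v ∈ p, V.ρ g v ∈ p) : subrep V p hp ⟶ V where
  hom := ObjectProperty.homMk (ModuleCat.ofHom p.subtype)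
  comm := fun g => by ext v; rfl

theorem mono_of_inj {X Y : FDRep ℂ G} (f : X ⟶ Y) (hf : Function.Injective f.hom) :
    Mono f := by
  constructor
  intro Z g h w
  ext z
  exact hf (congrArg (fun (q : Z ⟶ Y) => q.hom z) w)

theorem comm_apply {X Y : FDRep ℂ G} (f : X ⟶ Y) (g : G) (x : X) :
    f.hom (X.ρ g x) = Y.ρ g (f.hom x) :=
  congrArg (fun (q : X.V ⟶ Y.V) => q x) (f.comm g)

theorem injective_of_mono {X Y : FDRep ℂ G} (f : X ⟶ Y) [Mono f] :
    Function.Injective f.hom := by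
  have h0 : ∀ x : X, f.hom x = 0 → x = 0 := by
    intro x hx
    have hKinv : ∀ (g : G), ∀ v ∈ LinearMap.ker f.hom.hom.hom, X.ρ g v ∈ LinearMap.ker f.hom.hom.hom := by
      intro g v hv
      have h1 : f.hom (X.ρ g v) = Y.ρ g (f.hom v) := comm_apply f g v
      have h2 : f.hom v = 0 := hv
      have h3 : Y.ρ g (f.hom v) = 0 := by rw [h2, map_zero]
      exact LinearMap.mem_ker.mpr (h1.trans h3)
    have hι : subrepι X _ hKinv ≫ f = 0 := by
      apply Action.hom_ext
      apply FGModuleCat.hom_ext; apply LinearMap.ext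
      rintro ⟨v, hv⟩
      show f.hom v = (0 : subrep X _ hKinv ⟶ Y).hom ⟨v, hv⟩
      rw [Action.zero_hom]
      exact hv
    have hz : subrepι X _ hKinv = 0 := by
      rw [← cancel_mono f, hι, Limits.zero_comp]
    have hxv : x = (subrepι X _ hKinv).hom ⟨x, hx⟩ := rfl
    rw [hxv, hz, Action.zero_hom]
    rfl
  intro a b hab
  have := h0 (a - b) (by rw [map_sub, hab, sub_self])
  exact sub_eq_zero.mp this

/-- The (left) regular representation on the monoid algebra. -/
noncomputable def regRep : Representation ℂ G (MonoidAlgebra ℂ G) where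
  toFun g := LinearMap.mulLeft ℂ (single g 1)
  map_one' := by
    show LinearMap.mulLeft ℂ (single (1:G) (1:ℂ)) = 1
    rw [show (single (1:G) (1:ℂ)) = 1 from rfl, LinearMap.mulLeft_one]; rfl
  map_mul' g₁ g₂ := by
    show LinearMap.mulLeft ℂ (single (g₁ * g₂) (1:ℂ)) = _
    rw [show single (g₁*g₂) (1:ℂ) = single g₁ 1 * single g₂ 1 by
      rw [single_mul_single, one_mul]]
    exact LinearMap.ext fun y => mul_assoc _ _ _

/-- The regular representation as an object of `FDRep`. -/
noncomputable def Areg : FDRep ℂ G := FDRep.of (regRep (G := G))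

/-- A `ℂ`-subspace of the monoid algebra stable under left multiplication by group
elements is a submodule over the monoid algebra. -/
noncomputable def toASub (p : Submodule ℂ (MonoidAlgebra ℂ G))
    (hp : ∀ (g : G), ∀ y ∈ p, single g 1 * y ∈ p) :
    Submodule (MonoidAlgebra ℂ G) (MonoidAlgebra ℂ G) where
  carrier := p
  add_mem' := fun ha hb => p.add_mem ha hb
  zero_mem' := p.zero_mem
  smul_mem' := fun a y hy => by
    rw [smul_eq_mul]
    induction a using MonoidAlgebra.induction_on with
    | of g => exact hp g y hy
    | add a b ha hb => rw [add_mul]; exact p.add_mem ha hb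
    | smul r a ha => rw [smul_mul_assoc]; exact p.smul_mem r ha

theorem mem_toASub {p : Submodule ℂ (MonoidAlgebra ℂ G)}
    {hp : ∀ (g : G), ∀ y ∈ p, single g 1 * y ∈ p} {y : MonoidAlgebra ℂ G} :
    y ∈ toASub p hp ↔ y ∈ p := Iff.rfl

theorem restrictScalars_inv (S : Submodule (MonoidAlgebra ℂ G) (MonoidAlgebra ℂ G)) :
    ∀ (g : G), ∀ v ∈ S.restrictScalars ℂ, (Areg (G := G)).ρ g v ∈ S.restrictScalars ℂ := by
  intro g v hv
  rw [Submodule.restrictScalars_mem] at hv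
  show single g 1 * v ∈ S
  simpa [smul_eq_mul] using S.smul_mem (single g 1) hv

/-- The `FDRep` object attached to a submodule of the monoid algebra. -/
noncomputable def VS (S : Submodule (MonoidAlgebra ℂ G) (MonoidAlgebra ℂ G)) : FDRep ℂ G :=
  subrep (Areg (G := G)) (S.restrictScalars ℂ) (restrictScalars_inv S)

theorem VS_ρ_coe (S : Submodule (MonoidAlgebra ℂ G) (MonoidAlgebra ℂ G)) (g : G)
    (v : VS S) : ((show ↥(S.restrictScalars ℂ) from (VS S).ρ g v : _) : MonoidAlgebra ℂ G)
      = single g 1 * ((show ↥(S.restrictScalars ℂ) from v : _) : MonoidAlgebra ℂ G) := rfl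

/-- The underlying linear map of a morphism into `VS S`. -/
noncomputable def homAsLinear {Y : FDRep ℂ G} (S : Submodule (MonoidAlgebra ℂ G) (MonoidAlgebra ℂ G))
    (f : Y ⟶ VS S) : (Y : Type) →ₗ[ℂ] ↥(S.restrictScalars ℂ) := f.hom.hom.hom

theorem simple_VS (S : Submodule (MonoidAlgebra ℂ G) (MonoidAlgebra ℂ G))
    (hS : IsSimpleModule (MonoidAlgebra ℂ G) ↥S) : Simple (VS S) := by
  have hatom : IsAtom S := isSimpleModule_iff_isAtom.mp hS
  obtain ⟨s, hsS, hs0⟩ : ∃ s, s ∈ S ∧ s ≠ 0 := by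
    by_contra hcon
    push_neg at hcon
    exact hatom.1 ((Submodule.eq_bot_iff S).mpr fun y hy => hcon y hy)
  constructor
  intro Y f m
  haveI := m
  constructor
  · intro hiso hf0
    let el : VS S := (⟨s, hsS⟩ : S.restrictScalars ℂ)
    have h2 : f.hom ((inv f).hom el) = el :=
      congrArg (fun (q : VS S ⟶ VS S) => q.hom el) (IsIso.inv_hom_id f)
    obtain ⟨w, hw⟩ : ∃ w, f.hom w = el := ⟨(inv f).hom el, h2⟩
    rw [hf0] at hw
    have hz : ((0 : Y ⟶ VS S).hom w) = (0 : ↥(S.restrictScalars ℂ)) := by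
      rw [Action.zero_hom]; rfl
    have hw0 : (⟨s, hsS⟩ : S.restrictScalars ℂ) = (0 : ↥(S.restrictScalars ℂ)) :=
      (hz.symm.trans hw).symm
    exact hs0 (congrArg Subtype.val hw0)
  · intro hf0
    have hinj : Function.Injective (homAsLinear S f) := injective_of_mono f
    have hcomm : ∀ (g : G) (y : Y),
        homAsLinear S f (Y.ρ g y) = (VS S).ρ g (f.hom y) := fun g y => comm_apply f g y
    set R : Submodule ℂ (MonoidAlgebra ℂ G) :=
      LinearMap.range ((S.restrictScalars ℂ).subtype.comp (homAsLinear S f)) with hRdef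
    have memR : ∀ y : MonoidAlgebra ℂ G,
        y ∈ R ↔ ∃ z : Y, ((homAsLinear S f z : ↥(S.restrictScalars ℂ)) : MonoidAlgebra ℂ G) = y :=
      fun y => Iff.rfl
    have hR : ∀ (g : G), ∀ y ∈ R, single g 1 * y ∈ R := by
      intro g y hy
      obtain ⟨z, hz⟩ := (memR y).mp hy
      refine (memR _).mpr ⟨Y.ρ g z, ?_⟩
      have e1 : homAsLinear S f (Y.ρ g z) = (VS S).ρ g (f.hom z) := hcomm g z
      have e2 : ((homAsLinear S f (Y.ρ g z) : ↥(S.restrictScalars ℂ)) : MonoidAlgebra ℂ G)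
          = ((show ↥(S.restrictScalars ℂ) from (VS S).ρ g (f.hom z)) : MonoidAlgebra ℂ G) :=
        congrArg Subtype.val e1
      rw [e2]
      have e3 : ((show ↥(S.restrictScalars ℂ) from (VS S).ρ g (f.hom z)) : MonoidAlgebra ℂ G)
          = single g 1 * ((homAsLinear S f z : ↥(S.restrictScalars ℂ)) : MonoidAlgebra ℂ G) := rfl
      rw [e3, hz]
    have hTS : toASub R hR ≤ S := by
      intro y hy
      obtain ⟨z, hz⟩ := (memR y).mp hy
      have h4 := (homAsLinear S f z).2
      rw [Submodule.restrictScalars_mem] at h4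
      rwa [hz] at h4
    have hTne : toASub R hR ≠ ⊥ := by
      intro hbot
      apply hf0
      apply Action.hom_ext
      apply FGModuleCat.hom_ext; apply LinearMap.ext
      intro z
      have hmem : ((homAsLinear S f z : ↥(S.restrictScalars ℂ)) : MonoidAlgebra ℂ G)
          ∈ toASub R hR := (memR _).mpr ⟨z, rfl⟩
      rw [hbot, Submodule.mem_bot] at hmem
      show homAsLinear S f z = (0 : Y ⟶ VS S).hom z
      exact Subtype.ext hmem
    have hTeq : toASub R hR = S := by
      by_contra hne
      exact hTne (hatom.2 _ (lt_of_le_of_ne hTS hne))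
    have hsurj : Function.Surjective (homAsLinear S f) := by
      rintro ⟨y, hy⟩
      have h5 : y ∈ toASub R hR := by
        rw [hTeq]
        exact (Submodule.restrictScalars_mem ℂ S y).mp hy
      obtain ⟨z, hz⟩ := (memR y).mp h5
      exact ⟨z, Subtype.ext hz⟩
    let e : (Y : Type) ≃ₗ[ℂ] ↥(S.restrictScalars ℂ) :=
      LinearEquiv.ofBijective (homAsLinear S f) ⟨hinj, hsurj⟩
    have hecoe : ∀ y : Y, e y = homAsLinear S f y := fun _ => rfl
    let ginv : VS S ⟶ Y :=
      { hom := ObjectProperty.homMk (ModuleCat.ofHom (X := ↥(S.restrictScalars ℂ)) (Y := (Y : Type)) (e.symm : ↥(S.restrictScalars ℂ) →ₗ[ℂ] (Y : Type)))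
        comm := by
          intro g
          apply FGModuleCat.hom_ext; apply LinearMap.ext
          intro x
          show e.symm ((VS S).ρ g x) = Y.ρ g (e.symm x)
          apply e.injective
          erw [e.apply_symm_apply, hecoe, hcomm g (e.symm x)]
          have h6 : f.hom (e.symm x) = e (e.symm x) := rfl
          erw [h6, e.apply_symm_apply] }
    refine ⟨⟨ginv, ?_, ?_⟩⟩
    · apply Action.hom_ext
      apply FGModuleCat.hom_ext; apply LinearMap.ext
      intro y
      show e.symm (homAsLinear S f y) = y
      rw [← hecoe, e.symm_apply_apply]
    · apply Action.hom_ext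
      apply FGModuleCat.hom_ext; apply LinearMap.ext
      intro x
      show homAsLinear S f (e.symm x) = x
      erw [← hecoe, e.apply_symm_apply]

noncomputable def xH (H : Subgroup G) [Fintype H] : MonoidAlgebra ℂ G :=
  ∑ h : H, single (h : G) 1

theorem single_mul_xH (H : Subgroup G) [Fintype H] {h : G} (hh : h ∈ H) :
    single h (1:ℂ) * xH H = xH H := by
  rw [xH, Finset.mul_sum]
  exact Fintype.sum_equiv (Equiv.mulLeft (⟨h, hh⟩ : H)) _ _ fun a => by
    rw [single_mul_single, one_mul]; rfl

theorem coeff_single_mul_xH (H : Subgroup G) [Fintype H] [DecidablePred (· ∈ H)] (g g' : G) :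
    (single g (1:ℂ) * xH H).coeff g' = if g⁻¹ * g' ∈ H then 1 else 0 := by
  rw [xH, Finset.mul_sum]
  simp only [single_mul_single, one_mul]
  rw [MonoidAlgebra.coeff_sum, Finsupp.finset_sum_apply]
  haveI : DecidableEq G := Classical.decEq G
  simp only [MonoidAlgebra.coeff_single, Finsupp.single_apply]
  by_cases hc : g⁻¹ * g' ∈ H
  · simp only [if_pos hc]
    refine (Finset.sum_eq_single_of_mem (⟨g⁻¹ * g', hc⟩ : H) (Finset.mem_univ _)
      (fun b _ hb => if_neg fun he =>
        hb (Subtype.ext (show (b:G) = g⁻¹ * g' by rw [← he]; group)))).trans ?_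
    exact if_pos (by group)
  · simp only [if_neg hc]
    refine Finset.sum_eq_zero ?_
    intro b _
    exact if_neg fun he => hc (by rw [← he]; simpa using b.2)

/-- The key step: if the restriction functor is `normal' then every simple constituent of
the cyclic module generated by `xH H` is `H`-trivial. -/
theorem key (H : Subgroup G) [Fintype H]
    (hyp : ∀ V : FDRep ℂ G, Simple V →
        (∃ v : V, v ≠ 0 ∧ ∀ h ∈ H, V.ρ h v = v) →
        (∀ v : V, ∀ h ∈ H, V.ρ h v = v))
    (S : Submodule (MonoidAlgebra ℂ G) (MonoidAlgebra ℂ G))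
    (hS : IsSimpleModule (MonoidAlgebra ℂ G) ↥S)
    (hSM : S ≤ Submodule.span (MonoidAlgebra ℂ G) {xH H}) :
    ∀ y ∈ S, ∀ h ∈ H, single h (1:ℂ) * y = y := by
  haveI : NeZero ((Fintype.card G : ℂ)) := ⟨Nat.cast_ne_zero.mpr Fintype.card_ne_zero⟩
  obtain ⟨p, hp⟩ := MonoidAlgebra.exists_leftInverse_of_injective
    (Submodule.inclusion hSM) (Submodule.ker_inclusion _ _ _)
  have hxM : xH H ∈ Submodule.span (MonoidAlgebra ℂ G) {xH H} :=
    Submodule.mem_span_singleton_self _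
  set s₀ : ↥S := p ⟨xH H, hxM⟩ with hs₀
  have hs₀fix : ∀ h ∈ H, single h (1:ℂ) * (s₀ : MonoidAlgebra ℂ G) = s₀ := by
    intro h hh
    have h1 : (single h (1:ℂ)) • (⟨xH H, hxM⟩ : Submodule.span (MonoidAlgebra ℂ G) {xH H})
        = ⟨xH H, hxM⟩ := by
      apply Subtype.ext
      rw [Submodule.coe_smul, smul_eq_mul]
      exact single_mul_xH H hh
    calc single h (1:ℂ) * (s₀ : MonoidAlgebra ℂ G)
        = ((single h (1:ℂ) • s₀ : ↥S) : MonoidAlgebra ℂ G) := by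
          rw [Submodule.coe_smul, smul_eq_mul]
      _ = ((p ((single h (1:ℂ)) • ⟨xH H, hxM⟩) : ↥S) : MonoidAlgebra ℂ G) := by
          rw [map_smul]
      _ = (s₀ : MonoidAlgebra ℂ G) := by rw [h1]
  have hs₀ne : s₀ ≠ 0 := by
    intro h0
    have hall : ∀ m : ↥(Submodule.span (MonoidAlgebra ℂ G) {xH H}), p m = 0 := by
      intro m
      obtain ⟨a, ha⟩ := Submodule.mem_span_singleton.mp m.2
      have hm : m = a • (⟨xH H, hxM⟩ : Submodule.span (MonoidAlgebra ℂ G) {xH H}) :=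
        Subtype.ext (by rw [Submodule.coe_smul, ha])
      rw [hm, map_smul, ← hs₀, h0, smul_zero]
    obtain ⟨s, hsS, hs0⟩ : ∃ s, s ∈ S ∧ s ≠ 0 := by
      have hatom : IsAtom S := isSimpleModule_iff_isAtom.mp hS
      by_contra hcon
      push_neg at hcon
      exact hatom.1 ((Submodule.eq_bot_iff S).mpr fun y hy => hcon y hy)
    have h2 : p (Submodule.inclusion hSM ⟨s, hsS⟩) = ⟨s, hsS⟩ :=
      congrArg (fun (q : ↥S →ₗ[MonoidAlgebra ℂ G] ↥S) => q ⟨s, hsS⟩) hp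
    rw [hall] at h2
    exact hs0 (congrArg Subtype.val h2.symm)
  -- apply the hypothesis to the simple object `VS S`
  have hfixall := hyp (VS S) (simple_VS S hS) ?_
  · intro y hy h hh
    have hmem : y ∈ S.restrictScalars ℂ := (Submodule.restrictScalars_mem ℂ S y).mpr hy
    have := hfixall ((⟨y, hmem⟩ : S.restrictScalars ℂ) : VS S) h hh
    have hval := congrArg Subtype.val
      (show (show ↥(S.restrictScalars ℂ) from (VS S).ρ h ((⟨y, hmem⟩ : S.restrictScalars ℂ) : VS S))
        = ⟨y, hmem⟩ from this)
    exact hval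
  · -- the nonzero `H`-fixed vector
    have hmem : (s₀ : MonoidAlgebra ℂ G) ∈ S.restrictScalars ℂ :=
      (Submodule.restrictScalars_mem ℂ S _).mpr s₀.2
    refine ⟨((⟨(s₀ : MonoidAlgebra ℂ G), hmem⟩ : S.restrictScalars ℂ) : VS S), ?_, ?_⟩
    · intro h0
      apply hs₀ne
      apply Subtype.ext
      exact congrArg Subtype.val (show (⟨(s₀ : MonoidAlgebra ℂ G), hmem⟩ : S.restrictScalars ℂ)
        = (0 : ↥(S.restrictScalars ℂ)) from h0)
    · intro h hh
      exact Subtype.ext (hs₀fix h hh)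

end ResNormalAux

open ResNormalAux MonoidAlgebra in
/-- For a finite group `G` and a subgroup `H`, the restriction functor
`Rep(G) → Rep(H)` is normal — i.e. for every irreducible representation `V` of `G`, if
the trivial representation of `H` occurs in `Res V` (there is a nonzero `H`-fixed
vector) then `Res V` is a direct sum of copies of the trivial representation of `H`
(every vector is `H`-fixed) — if and only if `H` is a normal subgroup of `G`. -/
theorem res_normal_iff_normal {G : Type} [Group G] [Fintype G] (H : Subgroup G) :
    (∀ V : FDRep ℂ G, Simple V →
        (∃ v : V, v ≠ 0 ∧ ∀ h ∈ H, V.ρ h v = v) →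
        (∀ v : V, ∀ h ∈ H, V.ρ h v = v)) ↔ H.Normal := by
  constructor
  · intro hyp
    haveI : Fintype ↥H := Fintype.ofFinite _
    haveI : DecidablePred (· ∈ H) := Classical.decPred _
    haveI : NeZero ((Fintype.card G : ℂ)) := ⟨Nat.cast_ne_zero.mpr Fintype.card_ne_zero⟩
    have key2 : ∀ (g₀ h₀ : G), h₀ ∈ H → g₀⁻¹ * (h₀ * g₀) ∈ H := by
      intro g₀ h₀ hh₀
      have hP : ∀ y ∈ Submodule.span (MonoidAlgebra ℂ G) {xH H},
          ∀ h ∈ H, single h (1:ℂ) * y = y := by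
        intro y hy
        rw [← IsSemisimpleModule.sSup_simples_le (R := MonoidAlgebra ℂ G)
          (Submodule.span (MonoidAlgebra ℂ G) {xH H}), sSup_eq_iSup'] at hy
        refine Submodule.iSup_induction (motive := fun z => ∀ h ∈ H, single h (1:ℂ) * z = z) _ hy ?_ ?_ ?_
        · rintro ⟨S, hS, hSM⟩ z hz
          exact key H hyp S hS hSM z hz
        · intro h hh; rw [mul_zero]
        · intro a b ha hb h hh
          rw [mul_add, ha h hh, hb h hh]
      have hy : single g₀ (1:ℂ) * xH H ∈ Submodule.span (MonoidAlgebra ℂ G) {xH H} := by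
        have h6 := Submodule.smul_mem (Submodule.span (MonoidAlgebra ℂ G) {xH H})
          (single g₀ (1:ℂ)) (Submodule.mem_span_singleton_self (xH H))
        rwa [smul_eq_mul] at h6
      have he := hP _ hy h₀ hh₀
      have he2 : single (h₀ * g₀) (1:ℂ) * xH H = single g₀ 1 * xH H := by
        rw [← he, ← mul_assoc, single_mul_single, one_mul]
      have hco := congrArg (fun q : MonoidAlgebra ℂ G => q.coeff (h₀ * g₀)) he2
      simp only [coeff_single_mul_xH] at hco
      by_contra hnot
      rw [if_pos (show (h₀*g₀)⁻¹ * (h₀*g₀) ∈ H by rw [inv_mul_cancel]; exact H.one_mem),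
        if_neg hnot] at hco
      exact one_ne_zero hco
    constructor
    intro n hn g
    have h7 := key2 g⁻¹ n hn
    simpa [mul_assoc] using h7
  · intro hN V hs hex v' h hh
    haveI := hs
    obtain ⟨v, hv0, hfix⟩ := hex
    let p : Submodule ℂ V :=
      { carrier := {w | ∀ h' ∈ H, V.ρ h' w = w}
        add_mem' := fun {a b} ha hb h' hh' => by rw [map_add, ha h' hh', hb h' hh']
        zero_mem' := fun h' hh' => map_zero _
        smul_mem' := fun c w hw h' hh' => by rw [map_smul, hw h' hh'] }
    have hpinv : ∀ (g : G), ∀ w ∈ p, V.ρ g w ∈ p := by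
      intro g w hw h' hh'
      have hc : g⁻¹ * h' * g ∈ H := by
        have h8 := hN.conj_mem h' hh' g⁻¹
        simpa [mul_assoc] using h8
      have e1 : V.ρ h' (V.ρ g w) = V.ρ (h' * g) w := by rw [map_mul]; rfl
      have e2 : V.ρ (h' * g) w = V.ρ g (V.ρ (g⁻¹ * h' * g) w) := by
        rw [show h' * g = g * (g⁻¹ * h' * g) by group, map_mul]; rfl
      rw [e1, e2, hw _ hc]
    have hmono : Mono (subrepι V p hpinv) :=
      mono_of_inj _ (fun a b hab => Subtype.ext hab)
    haveI := hmono
    have hne : subrepι V p hpinv ≠ 0 := by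
      intro h0
      apply hv0
      have h1 : v = (subrepι V p hpinv).hom ⟨v, hfix⟩ := rfl
      rw [h1, h0]
      show (0 : subrep V p hpinv ⟶ V).hom ⟨v, hfix⟩ = 0
      rw [Action.zero_hom]; rfl
    have hiso : IsIso (subrepι V p hpinv) := (Simple.mono_isIso_iff_nonzero _).mpr hne
    have hsurj : ∀ w : V, w ∈ p := by
      intro w
      have h2 : (subrepι V p hpinv).hom ((inv (subrepι V p hpinv)).hom w) = w :=
        congrArg (fun (q : V ⟶ V) => q.hom w) (IsIso.inv_hom_id (subrepι V p hpinv))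
      rw [← h2]
      exact ((inv (subrepι V p hpinv)).hom w).2
    exact hsurj v' h hh
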